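/- Under the set Υ of conditions, the Newton sequence x_{k+1} = x_k − (F'(x_k))⁻¹ F(x_k) started at x₀ is well defined (in particular F'(x_k) is invertible for every k ≥ 0), all its members remain in the closed ball B̄(x₀, v₁*), and it converges to a point x* satisfying F(x*) = 0. Moreover the majorization estimates ‖x_{k+1} − x_k‖ ≤ v_{k+1} − v_k and ‖x* − x_k‖ ≤ v₁* − v_k hold for all k ≥ 0, where the scalar sequence {v_k} is non-decreasing and converges to v₁*. -/

import Mathlib

open Metric Filter intervalIntegral

lemma newton_taylor_aux
    {X Y : Type*} [NormedAddCommGroup X] [NormedSpace ℝ X] [CompleteSpace X]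
    [NormedAddCommGroup Y] [NormedSpace ℝ Y]
    (DF : Set X) (F : X → Y) (F' : X → X →L[ℝ] Y)
    (hFderiv : ∀ x ∈ DF, HasFDerivAt F (F' x) x)
    (hFcont : ContinuousOn F' DF)
    (B : Y →L[ℝ] X)
    (c h : X) (hseg : ∀ t : ℝ, t ∈ Set.Icc (0:ℝ) 1 → c + t • h ∈ DF)
    (g : ℝ → ℝ) (hg : ContinuousOn g (Set.Icc 0 1))
    (hb : ∀ t ∈ Set.Icc (0:ℝ) 1, ‖B ((F' (c + t • h)) h - (F' c) h)‖ ≤ g t) :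
    ‖B (F (c + h)) - B (F c) - B ((F' c) h)‖ ≤ ∫ t in (0:ℝ)..1, g t := by
  set φ : ℝ → X := fun t => B (F (c + t • h)) - t • B ((F' c) h) with hφ
  set φ' : ℝ → X := fun t => B ((F' (c + t • h)) h - (F' c) h) with hφ'
  have hIcc : Set.uIcc (0:ℝ) 1 = Set.Icc 0 1 := Set.uIcc_of_le zero_le_one
  have hderiv : ∀ t ∈ Set.uIcc (0:ℝ) 1, HasDerivAt φ (φ' t) t := by
    intro t ht
    rw [hIcc] at ht
    have h1 : HasDerivAt (fun t : ℝ => c + t • h) h t := by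
      simpa using ((hasDerivAt_id t).smul_const h).const_add c
    have h2 : HasDerivAt (fun t : ℝ => F (c + t • h)) ((F' (c + t • h)) h) t := by
      exact (hFderiv _ (hseg t ht)).comp_hasDerivAt t h1
    have h3 : HasDerivAt (fun t : ℝ => B (F (c + t • h))) (B ((F' (c + t • h)) h)) t :=
      B.hasFDerivAt.comp_hasDerivAt t h2
    have h4 : HasDerivAt (fun t : ℝ => t • B ((F' c) h)) (B ((F' c) h)) t := by
      simpa using (hasDerivAt_id t).smul_const (B ((F' c) h))
    exact (h3.sub h4).congr_deriv (by simp only [φ', map_sub])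
  have hcontφ' : ContinuousOn φ' (Set.Icc 0 1) := by
    have hcseg : ContinuousOn (fun t : ℝ => c + t • h) (Set.Icc (0:ℝ) 1) := by fun_prop
    have h5 : ContinuousOn (fun t : ℝ => F' (c + t • h)) (Set.Icc (0:ℝ) 1) :=
      hFcont.comp hcseg (fun t ht => hseg t ht)
    have h6 : ContinuousOn (fun t : ℝ => (F' (c + t • h)) h) (Set.Icc (0:ℝ) 1) :=
      h5.clm_apply continuousOn_const
    exact B.continuous.comp_continuousOn (h6.sub continuousOn_const)
  have hint : IntervalIntegrable φ' MeasureTheory.volume 0 1 :=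
    (by rwa [hIcc] : ContinuousOn φ' (Set.uIcc (0:ℝ) 1)).intervalIntegrable
  have hFTC : ∫ t in (0:ℝ)..1, φ' t = φ 1 - φ 0 :=
    integral_eq_sub_of_hasDerivAt hderiv hint
  have heq : B (F (c + h)) - B (F c) - B ((F' c) h) = ∫ t in (0:ℝ)..1, φ' t := by
    rw [hFTC]
    simp only [φ, one_smul, zero_smul, sub_zero]
    abel
  rw [heq]
  calc ‖∫ t in (0:ℝ)..1, φ' t‖ ≤ ∫ t in (0:ℝ)..1, ‖φ' t‖ :=
        intervalIntegral.norm_integral_le_integral_norm zero_le_one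
    _ ≤ ∫ t in (0:ℝ)..1, g t := by
        apply intervalIntegral.integral_mono_on zero_le_one hint.norm
          ((by rwa [hIcc] : ContinuousOn g (Set.uIcc (0:ℝ) 1)).intervalIntegrable)
        exact hb


set_option maxHeartbeats 2000000 in

/-- Under the set Υ of conditions, the Newton sequence is well defined (each `F'(x_k)`
is invertible), stays in the closed ball `B̄(x₀, v₁*)`, converges to a solution `x*` of
`F(x) = 0`, and the majorization estimates hold, with the majorizing scalar sequence
`{v_k}` non-decreasing and converging to the minimal fixed point `v₁*` of `ψ`. -/
theorem newton_convergence_relaxed_continuity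
    {X Y : Type*} [NormedAddCommGroup X] [NormedSpace ℝ X] [CompleteSpace X]
    [NormedAddCommGroup Y] [NormedSpace ℝ Y] [CompleteSpace Y]
    (DF : Set X) (hDF : IsOpen DF)
    (F : X → Y) (F' : X → X →L[ℝ] Y)
    (hFderiv : ∀ x ∈ DF, HasFDerivAt F (F' x) x)
    (hFcont : ContinuousOn F' DF)
    (x₀ : X) (hx₀ : x₀ ∈ DF)
    (B : Y →L[ℝ] X)
    (hB₁ : ∀ y, (F' x₀) (B y) = y) (hB₂ : ∀ z, B ((F' x₀) z) = z)
    (η R : ℝ) (hη : 0 < η) (hR : 0 < R)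
    (hball : closedBall x₀ R ⊆ DF)
    (ω₀ : ℝ → ℝ)
    (hωcont : ContinuousOn ω₀ (Set.Icc 0 R))
    (hωmono : MonotoneOn ω₀ (Set.Icc 0 R))
    (hωnn : ∀ r ∈ Set.Icc (0:ℝ) R, 0 ≤ ω₀ r)
    (hω0 : ω₀ 0 = 0)
    (hbound : ∀ x : X, ∀ r : ℝ, ‖x - x₀‖ ≤ r → r ≤ R →
        ‖B.comp (F' x - F' x₀)‖ ≤ ω₀ r)
    (hη0 : ‖B (F x₀)‖ ≤ η)
    (ψ : ℝ → ℝ)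
    (hψdef : ∀ u, ψ u = η + 2 * (1 - ω₀ u)⁻¹ * ∫ l in (0:ℝ)..u, ω₀ l)
    (hψcont : ContinuousOn ψ (Set.Icc 0 R))
    (hψmono : MonotoneOn ψ (Set.Icc 0 R))
    (vstar : ℝ) (hfix : ψ vstar = vstar)
    (hvstar₁ : η < vstar) (hvstar₂ : vstar ≤ R)
    (hmin : ∀ w ∈ Set.Icc (0:ℝ) R, ψ w = w → vstar ≤ w)
    (v : ℕ → ℝ) (hv0 : v 0 = 0) (hvrec : ∀ k, v (k + 1) = ψ (v k)) :
    ∃ x : ℕ → X, x 0 = x₀ ∧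
      (∀ k, ∃ A : Y →L[ℝ] X, (∀ y, (F' (x k)) (A y) = y) ∧ (∀ z, A ((F' (x k)) z) = z) ∧
        x (k + 1) = x k - A (F (x k))) ∧
      (∀ k, x k ∈ closedBall x₀ vstar) ∧
      (∀ k, ‖x (k + 1) - x k‖ ≤ v (k + 1) - v k) ∧
      Monotone v ∧ Tendsto v atTop (nhds vstar) ∧
      ∃ xstar : X, Tendsto x atTop (nhds xstar) ∧ F xstar = 0 ∧
        ∀ k, ‖xstar - x k‖ ≤ vstar - v k := by
  -- scalar preliminaries
  have hvstar0 : (0:ℝ) < vstar := lt_trans hη hvstar₁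
  have hmemstar : vstar ∈ Set.Icc (0:ℝ) R := ⟨hvstar0.le, hvstar₂⟩
  have hintable : ∀ s t : ℝ, 0 ≤ s → s ≤ R → 0 ≤ t → t ≤ R →
      IntervalIntegrable ω₀ MeasureTheory.volume s t := by
    intro s t hs hs' ht ht'
    apply (hωcont.mono _).intervalIntegrable
    intro l hl
    rcases Set.mem_uIcc.1 hl with h | h
    · exact ⟨le_trans hs h.1, le_trans h.2 ht'⟩
    · exact ⟨le_trans ht h.1, le_trans h.2 hs'⟩
  have hI_nonneg : ∀ t ∈ Set.Icc (0:ℝ) R, 0 ≤ ∫ l in (0:ℝ)..t, ω₀ l := by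
    intro t ht
    apply intervalIntegral.integral_nonneg ht.1
    intro u hu; exact hωnn u ⟨hu.1, le_trans hu.2 ht.2⟩
  have hψ0 : ψ 0 = η := by
    rw [hψdef]; simp
  have hωstar : ω₀ vstar < 1 := by
    by_contra hcon
    push_neg at hcon
    rcases eq_or_lt_of_le hcon with heq | hlt
    · have : ψ vstar = η := by rw [hψdef, ← heq]; simp
      linarith [hfix ▸ this]
    · have hneg : (1 - ω₀ vstar)⁻¹ ≤ 0 := by
        apply inv_nonpos.2; linarith
      have : ψ vstar ≤ η := by
        rw [hψdef]
        nlinarith [hI_nonneg vstar hmemstar]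
      linarith [hfix ▸ this]
  -- v sequence facts
  have hv1 : v 1 = η := by rw [hvrec, hv0, hψ0]
  have hvb : ∀ k, 0 ≤ v k ∧ v k ≤ vstar := by
    intro k
    induction k with
    | zero => rw [hv0]; exact ⟨le_refl 0, hvstar0.le⟩
    | succ k ih =>
      rw [hvrec]
      have hmem : v k ∈ Set.Icc (0:ℝ) R := ⟨ih.1, le_trans ih.2 hvstar₂⟩
      have hup : ψ (v k) ≤ vstar := by
        rw [← hfix]; exact hψmono hmem hmemstar ih.2
      have hωk : ω₀ (v k) < 1 := lt_of_le_of_lt (hωmono hmem hmemstar ih.2) hωstar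
      have hlow : 0 ≤ ψ (v k) := by
        rw [hψdef]
        have h1 : 0 ≤ (1 - ω₀ (v k))⁻¹ := inv_nonneg.2 (by linarith)
        nlinarith [hI_nonneg (v k) hmem]
      exact ⟨hlow, hup⟩
  have hvmem : ∀ k, v k ∈ Set.Icc (0:ℝ) R := fun k => ⟨(hvb k).1, le_trans (hvb k).2 hvstar₂⟩
  have hvmono : Monotone v := by
    apply monotone_nat_of_le_succ
    intro k
    induction k with
    | zero => rw [hv0]; exact (hvb 1).1
    | succ k ih =>
      rw [hvrec, hvrec]
      exact hψmono (hvmem k) (hvmem (k+1)) ih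
  have hvtend : Tendsto v atTop (nhds vstar) := by
    have hbdd : BddAbove (Set.range v) := ⟨vstar, by rintro _ ⟨k, rfl⟩; exact (hvb k).2⟩
    have htend : Tendsto v atTop (nhds (⨆ k, v k)) := tendsto_atTop_ciSup hvmono hbdd
    have hLle : (⨆ k, v k) ≤ vstar := ciSup_le fun k => (hvb k).2
    have hL0 : 0 ≤ (⨆ k, v k) := le_trans (hvb 0).1 (le_ciSup hbdd 0)
    have hLmem : (⨆ k, v k) ∈ Set.Icc (0:ℝ) R := ⟨hL0, le_trans hLle hvstar₂⟩
    have hfixL : ψ (⨆ k, v k) = (⨆ k, v k) := by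
      have h1 : Tendsto (fun k => v (k+1)) atTop (nhds (⨆ k, v k)) :=
        htend.comp (tendsto_add_atTop_nat 1)
      have h2 : Tendsto (fun k => ψ (v k)) atTop (nhds (ψ (⨆ k, v k))) := by
        apply ((hψcont _ hLmem).tendsto).comp
        apply tendsto_nhdsWithin_of_tendsto_nhds_of_eventually_within _ htend
        exact Eventually.of_forall fun k => hvmem k
      have h3 : (fun k => v (k+1)) = fun k => ψ (v k) := funext fun k => hvrec k
      rw [h3] at h1
      exact tendsto_nhds_unique h2 h1
    have : vstar = (⨆ k, v k) := le_antisymm (hmin _ hLmem hfixL) hLle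
    rwa [← this] at htend
  -- operator facts
  have hone : B.comp (F' x₀) = (1 : X →L[ℝ] X) := by
    ext z; exact hB₂ z
  have hTnorm : ∀ (z : X) (r : ℝ), ‖z - x₀‖ ≤ r → r ≤ R → ‖B.comp (F' z) - 1‖ ≤ ω₀ r := by
    intro z r h1 h2
    have : B.comp (F' z) - 1 = B.comp (F' z - F' x₀) := by
      rw [← hone, ← ContinuousLinearMap.comp_sub]
    rw [this]; exact hbound z r h1 h2
  have hωle : ∀ r : ℝ, 0 ≤ r → r ≤ vstar → ω₀ r < 1 := fun r h0 h1 =>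
    lt_of_le_of_lt (hωmono ⟨h0, le_trans h1 hvstar₂⟩ hmemstar h1) hωstar
  have hunit : ∀ (z : X) (r : ℝ), ‖z - x₀‖ ≤ r → 0 ≤ r → r ≤ vstar →
      IsUnit (B.comp (F' z)) := by
    intro z r h1 h0 h2
    have hlt : ‖1 - B.comp (F' z)‖ < 1 := by
      rw [norm_sub_rev]
      exact lt_of_le_of_lt (hTnorm z r h1 (le_trans h2 hvstar₂)) (hωle r h0 h2)
    have := (Units.oneSub (1 - B.comp (F' z)) hlt).isUnit
    rwa [Units.val_oneSub, sub_sub_cancel] at this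
  have hinvb : ∀ (z : X) (r : ℝ), ‖z - x₀‖ ≤ r → 0 ≤ r → r ≤ vstar →
      (∀ w, (Ring.inverse (B.comp (F' z))) ((B.comp (F' z)) w) = w) ∧
      (∀ w, (B.comp (F' z)) ((Ring.inverse (B.comp (F' z))) w) = w) ∧
      (∀ w : X, ‖(Ring.inverse (B.comp (F' z))) w‖ ≤ (1 - ω₀ r)⁻¹ * ‖w‖) := by
    intro z r h1 h0 h2
    have hu := hunit z r h1 h0 h2
    have e1 : Ring.inverse (B.comp (F' z)) * (B.comp (F' z)) = 1 := Ring.inverse_mul_cancel _ hu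
    have e2 : (B.comp (F' z)) * Ring.inverse (B.comp (F' z)) = 1 := Ring.mul_inverse_cancel _ hu
    have i1 : ∀ w, (Ring.inverse (B.comp (F' z))) ((B.comp (F' z)) w) = w := by
      intro w
      have := congrArg (fun f : X →L[ℝ] X => f w) e1
      simpa [ContinuousLinearMap.mul_apply] using this
    have i2 : ∀ w, (B.comp (F' z)) ((Ring.inverse (B.comp (F' z))) w) = w := by
      intro w
      have := congrArg (fun f : X →L[ℝ] X => f w) e2
      simpa [ContinuousLinearMap.mul_apply] using this
    refine ⟨i1, i2, ?_⟩
    intro w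
    set u := (Ring.inverse (B.comp (F' z))) w with hu'
    have hTu : (B.comp (F' z)) u = w := i2 w
    have hrw : u = w - ((B.comp (F' z)) - 1) u := by
      rw [ContinuousLinearMap.sub_apply, hTu, ContinuousLinearMap.one_apply]
      abel
    have hb1 : ‖((B.comp (F' z)) - 1) u‖ ≤ ω₀ r * ‖u‖ :=
      le_trans (ContinuousLinearMap.le_opNorm _ u)
        (mul_le_mul_of_nonneg_right (hTnorm z r h1 (le_trans h2 hvstar₂)) (norm_nonneg u))
    have hb2 : ‖u‖ ≤ ‖w‖ + ω₀ r * ‖u‖ := by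
      calc ‖u‖ = ‖w - ((B.comp (F' z)) - 1) u‖ := by rw [← hrw]
        _ ≤ ‖w‖ + ‖((B.comp (F' z)) - 1) u‖ := norm_sub_le _ _
        _ ≤ ‖w‖ + ω₀ r * ‖u‖ := by linarith
    have hpos : 0 < 1 - ω₀ r := by linarith [hωle r h0 h2]
    rw [inv_mul_eq_div, le_div_iff₀ hpos]
    nlinarith
  -- the Newton sequence
  set step : X → X := fun z => z - (Ring.inverse (B.comp (F' z))) (B (F z)) with hstep
  set x : ℕ → X := fun k => step^[k] x₀ with hxdef
  have hx0 : x 0 = x₀ := rfl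
  have hxs : ∀ k, x (k+1) = x k - (Ring.inverse (B.comp (F' (x k)))) (B (F (x k))) := by
    intro k
    rw [hxdef]; simp only [Function.iterate_succ_apply']
    rfl
  -- derivative of F at points of the ball
  have hmemDF : ∀ z : X, ‖z - x₀‖ ≤ vstar → z ∈ DF := by
    intro z hz
    exact hball (by rw [mem_closedBall, dist_eq_norm]; exact le_trans hz hvstar₂)
  -- step estimates
  have hFstep : ∀ k, ‖x k - x₀‖ ≤ v k → (F' (x k)) (x (k+1) - x k) = -(F (x k)) := by
    intro k hk
    obtain ⟨i1, i2, i3⟩ := hinvb (x k) (v k) hk (hvb k).1 (hvb k).2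
    have h1 : x (k+1) - x k = -((Ring.inverse (B.comp (F' (x k)))) (B (F (x k)))) := by
      rw [hxs k]; abel
    rw [h1, map_neg, neg_inj]
    have h2 : B ((F' (x k)) ((Ring.inverse (B.comp (F' (x k)))) (B (F (x k))))) = B (F (x k)) := by
      have := i2 (B (F (x k)))
      simpa [ContinuousLinearMap.comp_apply] using this
    calc (F' (x k)) ((Ring.inverse (B.comp (F' (x k)))) (B (F (x k))))
        = (F' x₀) (B ((F' (x k)) ((Ring.inverse (B.comp (F' (x k)))) (B (F (x k)))))) :=
          (hB₁ _).symm
      _ = (F' x₀) (B (F (x k))) := by rw [h2]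
      _ = F (x k) := hB₁ _
  have hstepEst : ∀ k, ‖x k - x₀‖ ≤ v k →
      ‖x (k+1) - x k‖ ≤ (1 - ω₀ (v k))⁻¹ * ‖B (F (x k))‖ := by
    intro k hk
    obtain ⟨i1, i2, i3⟩ := hinvb (x k) (v k) hk (hvb k).1 (hvb k).2
    have h1 : x (k+1) - x k = -((Ring.inverse (B.comp (F' (x k)))) (B (F (x k)))) := by
      rw [hxs k]; abel
    rw [h1, norm_neg]
    exact i3 _
  -- the grand induction
  have key : ∀ k, ‖x k - x₀‖ ≤ v k ∧ ‖x (k+1) - x k‖ ≤ v (k+1) - v k := by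
    intro k
    induction k with
    | zero =>
      constructor
      · rw [hx0, hv0]; simp
      · have h0 : ‖x 0 - x₀‖ ≤ v 0 := by rw [hx0, hv0]; simp
        have h1 := hstepEst 0 h0
        rw [hv0, hω0, sub_zero, inv_one, one_mul, hx0] at h1
        show ‖x 1 - x 0‖ ≤ v 1 - v 0
        rw [hv1, hv0, sub_zero, hx0]
        exact le_trans h1 hη0
    | succ k ih =>
      obtain ⟨ihk, ihs⟩ := ih
      set δ : ℝ := v (k+1) - v k with hδ
      have hδ0 : 0 ≤ δ := sub_nonneg.2 (hvmono (Nat.le_succ k))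
      have hx1 : ‖x (k+1) - x₀‖ ≤ v (k+1) := by
        calc ‖x (k+1) - x₀‖ = ‖(x (k+1) - x k) + (x k - x₀)‖ := by abel_nf
          _ ≤ ‖x (k+1) - x k‖ + ‖x k - x₀‖ := norm_add_le _ _
          _ ≤ (v (k+1) - v k) + v k := add_le_add ihs ihk
          _ = v (k+1) := by ring
      refine ⟨hx1, ?_⟩
      -- Taylor estimate for ‖B (F (x (k+1)))‖
      set c : X := x k with hc
      set h : X := x (k+1) - x k with hh
      have hch : c + h = x (k+1) := by rw [hc, hh]; abel
      have hnh : ‖h‖ ≤ δ := ihs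
      set a : ℝ := ω₀ (v k) with ha
      have hseg : ∀ t : ℝ, t ∈ Set.Icc (0:ℝ) 1 → ‖c + t • h - x₀‖ ≤ v k + t * δ := by
        intro t ht
        calc ‖c + t • h - x₀‖ = ‖(c - x₀) + t • h‖ := by abel_nf
          _ ≤ ‖c - x₀‖ + ‖t • h‖ := norm_add_le _ _
          _ ≤ v k + t * δ := by
              apply add_le_add ihk
              rw [norm_smul, Real.norm_eq_abs, abs_of_nonneg ht.1]
              exact mul_le_mul_of_nonneg_left hnh ht.1
      have hsegR : ∀ t : ℝ, t ∈ Set.Icc (0:ℝ) 1 → v k + t * δ ≤ v (k+1) := by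
        intro t ht
        have : t * δ ≤ δ := by nlinarith [ht.2, hδ0]
        linarith
      have hsegDF : ∀ t : ℝ, t ∈ Set.Icc (0:ℝ) 1 → c + t • h ∈ DF := by
        intro t ht
        exact hmemDF _ (le_trans (hseg t ht) (le_trans (hsegR t ht) (hvb (k+1)).2))
      set g : ℝ → ℝ := fun t => (ω₀ (v k + t * δ) + a) * δ with hg
      have hmaps : ∀ t : ℝ, t ∈ Set.Icc (0:ℝ) 1 → v k + t * δ ∈ Set.Icc (0:ℝ) R := by
        intro t ht
        constructor
        · have : 0 ≤ t * δ := mul_nonneg ht.1 hδ0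
          linarith [(hvb k).1]
        · exact le_trans (hsegR t ht) (hvmem (k+1)).2
      have hgcont : ContinuousOn g (Set.Icc 0 1) := by
        apply ContinuousOn.mul _ continuousOn_const
        apply ContinuousOn.add _ continuousOn_const
        exact hωcont.comp (by fun_prop) hmaps
      have hb : ∀ t ∈ Set.Icc (0:ℝ) 1, ‖B ((F' (c + t • h)) h - (F' c) h)‖ ≤ g t := by
        intro t ht
        set z : X := c + t • h with hz
        have e1 : B ((F' z) h - (F' c) h) = (B.comp ((F' z - F' x₀) - (F' c - F' x₀))) h := by
          simp [ContinuousLinearMap.comp_apply, ContinuousLinearMap.sub_apply]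
        have e2 : ‖B.comp ((F' z - F' x₀) - (F' c - F' x₀))‖
            ≤ ω₀ (v k + t * δ) + a := by
          have e3 : B.comp ((F' z - F' x₀) - (F' c - F' x₀))
              = B.comp (F' z - F' x₀) - B.comp (F' c - F' x₀) := by
            rw [ContinuousLinearMap.comp_sub]
          rw [e3]
          refine le_trans (norm_sub_le _ _) (add_le_add ?_ ?_)
          · exact hbound z _ (hseg t ht) (hmaps t ht).2
          · exact hbound c _ ihk (hvmem k).2
        calc ‖B ((F' z) h - (F' c) h)‖
            ≤ ‖B.comp ((F' z - F' x₀) - (F' c - F' x₀))‖ * ‖h‖ := by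
              rw [e1]; exact ContinuousLinearMap.le_opNorm _ _
          _ ≤ (ω₀ (v k + t * δ) + a) * δ := by
              apply mul_le_mul e2 hnh (norm_nonneg _)
              have h0a : 0 ≤ a := hωnn _ (hvmem k)
              have h0b : 0 ≤ ω₀ (v k + t * δ) := hωnn _ (hmaps t ht)
              linarith
      have htay := newton_taylor_aux DF F F' hFderiv hFcont B c h hsegDF g hgcont hb
      have hFck : (F' c) h = -(F c) := hFstep k ihk
      have hlhs : B (F (c + h)) - B (F c) - B ((F' c) h) = B (F (x (k+1))) := by
        rw [hch, hFck, map_neg]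
        abel
      -- compute the integral of g
      have hintg : ∫ t in (0:ℝ)..1, g t = (∫ l in (v k)..(v (k+1)), ω₀ l) + a * δ := by
        have e1 : ∀ t : ℝ, g t = ω₀ (δ * t + v k) * δ + a * δ := by
          intro t; rw [hg]; ring_nf
        have hcont1 : ContinuousOn (fun t : ℝ => ω₀ (δ * t + v k)) (Set.uIcc (0:ℝ) 1) := by
          rw [Set.uIcc_of_le zero_le_one]
          apply hωcont.comp (by fun_prop)
          intro t ht
          have := hmaps t ht
          rwa [show v k + t * δ = δ * t + v k by ring] at this
        have hint1 : IntervalIntegrable (fun t : ℝ => ω₀ (δ * t + v k) * δ)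
            MeasureTheory.volume 0 1 := (hcont1.mul continuousOn_const).intervalIntegrable
        calc ∫ t in (0:ℝ)..1, g t = ∫ t in (0:ℝ)..1, (ω₀ (δ * t + v k) * δ + a * δ) := by
              simp_rw [e1]
          _ = (∫ t in (0:ℝ)..1, ω₀ (δ * t + v k) * δ) + ∫ t in (0:ℝ)..1, (a * δ : ℝ) :=
              intervalIntegral.integral_add hint1 intervalIntegrable_const
          _ = δ * (∫ t in (0:ℝ)..1, ω₀ (δ * t + v k)) + a * δ := by
              rw [intervalIntegral.integral_mul_const, intervalIntegral.integral_const]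
              simp [mul_comm]
          _ = (∫ l in (v k)..(v (k+1)), ω₀ l) + a * δ := by
              congr 1
              have := intervalIntegral.smul_integral_comp_mul_add (a := (0:ℝ)) (b := 1)
                (f := ω₀) δ (v k)
              rw [show δ * (0:ℝ) + v k = v k by ring, show δ * (1:ℝ) + v k = v (k+1) by rw [hδ]; ring]
                at this
              simpa using this
      have hBF : ‖B (F (x (k+1)))‖ ≤ (∫ l in (v k)..(v (k+1)), ω₀ l) + a * δ := by
        rw [← hlhs, ← hintg]; exact htay
      -- final arithmetic
      set b' : ℝ := ω₀ (v (k+1)) with hb'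
      set I₁ : ℝ := ∫ l in (0:ℝ)..(v k), ω₀ l with hI₁
      set I₂ : ℝ := ∫ l in (0:ℝ)..(v (k+1)), ω₀ l with hI₂
      set J : ℝ := ∫ l in (v k)..(v (k+1)), ω₀ l with hJ
      have hadd : I₁ + J = I₂ :=
        intervalIntegral.integral_add_adjacent_intervals
          (hintable 0 (v k) le_rfl hR.le (hvmem k).1 (hvmem k).2)
          (hintable (v k) (v (k+1)) (hvmem k).1 (hvmem k).2 (hvmem (k+1)).1 (hvmem (k+1)).2)
      have haJ : a * δ ≤ J := by
        have h1 : ∀ l ∈ Set.Icc (v k) (v (k+1)), a ≤ ω₀ l := by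
          intro l hl
          exact hωmono (hvmem k) ⟨le_trans (hvmem k).1 hl.1, le_trans hl.2 (hvmem (k+1)).2⟩ hl.1
        have h2 := intervalIntegral.integral_mono_on (hvmono (Nat.le_succ k))
          intervalIntegrable_const
          (hintable (v k) (v (k+1)) (hvmem k).1 (hvmem k).2 (hvmem (k+1)).1 (hvmem (k+1)).2) h1
        rw [intervalIntegral.integral_const] at h2
        calc a * δ = (v (k+1) - v k) • a := by rw [smul_eq_mul]; ring
          _ ≤ J := h2
      have hI₁nn : 0 ≤ I₁ := hI_nonneg (v k) (hvmem k)
      have hab : a ≤ b' := hωmono (hvmem k) (hvmem (k+1)) (hvmono (Nat.le_succ k))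
      have hb1 : b' < 1 := hωle _ (hvb (k+1)).1 (hvb (k+1)).2
      have ha0 : 0 ≤ a := hωnn _ (hvmem k)
      have hpq : (1 - a)⁻¹ ≤ (1 - b')⁻¹ := by
        apply inv_anti₀ (by linarith) (by linarith)
      have hp0 : 0 < (1 - a)⁻¹ := inv_pos.2 (by linarith)
      have hq0 : 0 < (1 - b')⁻¹ := inv_pos.2 (by linarith)
      have e2 : v (k+2) = ψ (v (k+1)) := hvrec (k+1)
      rw [hψdef, ← hb', ← hI₂] at e2
      have e1 : v (k+1) = ψ (v k) := hvrec k
      rw [hψdef, ← ha, ← hI₁] at e1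
      have haddq : (1 - b')⁻¹ * I₁ + (1 - b')⁻¹ * J = (1 - b')⁻¹ * I₂ := by
        rw [← mul_add, hadd]
      calc ‖x (k+2) - x (k+1)‖ ≤ (1 - b')⁻¹ * ‖B (F (x (k+1)))‖ := hstepEst (k+1) hx1
        _ ≤ (1 - b')⁻¹ * (J + a * δ) := mul_le_mul_of_nonneg_left hBF hq0.le
        _ ≤ v (k+2) - v (k+1) := by
            nlinarith [e1, e2, haddq, mul_le_mul_of_nonneg_left haJ hq0.le,
              mul_nonneg (sub_nonneg.2 hpq) hI₁nn]
  -- conclusions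
  have hxball : ∀ k, x k ∈ closedBall x₀ vstar := by
    intro k
    rw [mem_closedBall, dist_eq_norm]
    exact le_trans (key k).1 (hvb k).2
  have hAex : ∀ k, ∃ A : Y →L[ℝ] X, (∀ y, (F' (x k)) (A y) = y) ∧ (∀ z, A ((F' (x k)) z) = z) ∧
      x (k + 1) = x k - A (F (x k)) := by
    intro k
    obtain ⟨i1, i2, i3⟩ := hinvb (x k) (v k) (key k).1 (hvb k).1 (hvb k).2
    refine ⟨(Ring.inverse (B.comp (F' (x k)))).comp B, ?_, ?_, ?_⟩
    · intro y
      have h2 : B ((F' (x k)) (((Ring.inverse (B.comp (F' (x k)))).comp B) y)) = B y := by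
        have := i2 (B y)
        simpa [ContinuousLinearMap.comp_apply] using this
      calc (F' (x k)) (((Ring.inverse (B.comp (F' (x k)))).comp B) y)
          = (F' x₀) (B ((F' (x k)) (((Ring.inverse (B.comp (F' (x k)))).comp B) y))) :=
            (hB₁ _).symm
        _ = (F' x₀) (B y) := by rw [h2]
        _ = y := hB₁ _
    · intro z
      have := i1 z
      simpa [ContinuousLinearMap.comp_apply] using this
    · rw [hxs k]
      rfl
  have hdist : ∀ n m, n ≤ m → ‖x m - x n‖ ≤ v m - v n := by
    intro n m hnm
    induction m, hnm using Nat.le_induction with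
    | base => simp
    | succ m hm ih =>
      calc ‖x (m+1) - x n‖ = ‖(x (m+1) - x m) + (x m - x n)‖ := by abel_nf
        _ ≤ ‖x (m+1) - x m‖ + ‖x m - x n‖ := norm_add_le _ _
        _ ≤ (v (m+1) - v m) + (v m - v n) := add_le_add (key m).2 ih
        _ = v (m+1) - v n := by ring
  have hcauchy : CauchySeq x := by
    apply cauchySeq_of_le_tendsto_0 (fun N => vstar - v N)
    · intro n m N hn hm
      rcases le_total n m with hle | hle
      · rw [dist_eq_norm, norm_sub_rev]
        calc ‖x m - x n‖ ≤ v m - v n := hdist n m hle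
          _ ≤ vstar - v N := by
              have h1 := (hvb m).2
              have h2 := hvmono hn
              linarith
      · rw [dist_eq_norm]
        calc ‖x n - x m‖ ≤ v n - v m := hdist m n hle
          _ ≤ vstar - v N := by
              have h1 := (hvb n).2
              have h2 := hvmono hm
              linarith
    · have h6 : Tendsto (fun N => vstar - v N) atTop (nhds (vstar - vstar)) :=
        tendsto_const_nhds.sub hvtend
      simpa using h6
  obtain ⟨xstar, hxstar⟩ := cauchySeq_tendsto_of_complete hcauchy
  have hest : ∀ k, ‖xstar - x k‖ ≤ vstar - v k := by
    intro k
    have h1 : Tendsto (fun m => ‖x m - x k‖) atTop (nhds ‖xstar - x k‖) :=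
      (hxstar.sub tendsto_const_nhds).norm
    apply le_of_tendsto h1
    filter_upwards [eventually_ge_atTop k] with m hm
    calc ‖x m - x k‖ ≤ v m - v k := hdist k m hm
      _ ≤ vstar - v k := by linarith [(hvb m).2]
  have hxstarball : ‖xstar - x₀‖ ≤ vstar := by
    have h1 := hest 0
    rw [hx0, hv0] at h1
    simpa using h1
  have hFxstar : F xstar = 0 := by
    have hDFx : xstar ∈ DF := hmemDF xstar hxstarball
    have hcontF : ContinuousAt F xstar := (hFderiv xstar hDFx).continuousAt
    have h1 : Tendsto (fun k => B (F (x k))) atTop (nhds (B (F xstar))) :=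
      (B.continuous.tendsto _).comp (hcontF.tendsto.comp hxstar)
    have hBFk : ∀ k, ‖B (F (x k))‖ ≤ 2 * (v (k+1) - v k) := by
      intro k
      obtain ⟨i1, i2, i3⟩ := hinvb (x k) (v k) (key k).1 (hvb k).1 (hvb k).2
      have e1 : B (F (x k)) =
          (B.comp (F' (x k))) ((Ring.inverse (B.comp (F' (x k)))) (B (F (x k)))) := (i2 _).symm
      have e2 : (Ring.inverse (B.comp (F' (x k)))) (B (F (x k))) = -(x (k+1) - x k) := by
        rw [hxs k]; abel
      have hTk : ‖B.comp (F' (x k))‖ ≤ 2 := by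
        have h3 := hTnorm (x k) (v k) (key k).1 (hvmem k).2
        have h4 : ‖(1 : X →L[ℝ] X)‖ ≤ 1 := ContinuousLinearMap.norm_id_le
        calc ‖B.comp (F' (x k))‖ = ‖(B.comp (F' (x k)) - 1) + 1‖ := by rw [sub_add_cancel]
          _ ≤ ‖B.comp (F' (x k)) - 1‖ + ‖(1 : X →L[ℝ] X)‖ := norm_add_le _ _
          _ ≤ ω₀ (v k) + 1 := add_le_add h3 h4
          _ ≤ 2 := by linarith [hωle (v k) (hvb k).1 (hvb k).2]
      calc ‖B (F (x k))‖
          = ‖(B.comp (F' (x k))) (-(x (k+1) - x k))‖ := by rw [← e2, ← e1]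
        _ = ‖(B.comp (F' (x k))) (x (k+1) - x k)‖ := by rw [map_neg, norm_neg]
        _ ≤ ‖B.comp (F' (x k))‖ * ‖x (k+1) - x k‖ := ContinuousLinearMap.le_opNorm _ _
        _ ≤ 2 * (v (k+1) - v k) :=
            mul_le_mul hTk (key k).2 (norm_nonneg _) (by norm_num)
    have h2 : Tendsto (fun k => B (F (x k))) atTop (nhds 0) := by
      apply squeeze_zero_norm hBFk
      have h3 : Tendsto (fun k => v (k+1) - v k) atTop (nhds 0) := by
        have := (hvtend.comp (tendsto_add_atTop_nat 1)).sub hvtend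
        simpa using this
      have := h3.const_mul (2:ℝ)
      simpa using this
    have hBF0 : B (F xstar) = 0 := tendsto_nhds_unique h1 h2
    have h5 := hB₁ (F xstar)
    rw [hBF0] at h5
    simpa using h5.symm
  exact ⟨x, hx0, hAex, hxball, fun k => (key k).2, hvmono, hvtend, xstar, hxstar, hFxstar, hest⟩
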